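/- Let A be a (graded super)algebra over a field, P a finitely generated projective A-module, and Z ⊆ P a submodule such that every A-homomorphism P → P/Z annihilates Z. Then P/Z is a projective module over the quotient algebra A/Ann_A(P/Z). -/

import Mathlib

/-!
Statement 6 (Schubert's criterion): Let `A` be a finite-dimensional algebra over a
field, `P` a finitely generated projective `A`-module, and `Z ⊆ P` a submodule such
that every `A`-homomorphism `P → P/Z` annihilates `Z`.  Then `P/Z` is projective
over `A/Ann_A(P/Z)`; equivalently (staying inside `A`-modules), for every surjection
`π : M ↠ N` of `A`-modules with `M` annihilated by `Ann_A(P/Z)`, every homomorphism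
`P/Z → N` lifts through `π`.
-/

universe u

theorem stmt6 (F : Type u) [Field F] (A : Type u) [Ring A] [Algebra F A]
    [FiniteDimensional F A]
    (P : Type u) [AddCommGroup P] [Module A P] [Module.Finite A P] [Module.Projective A P]
    (Z : Submodule A P)
    (hZ : ∀ f : P →ₗ[A] P ⧸ Z, ∀ z ∈ Z, f z = 0)
    (M N : Type u) [AddCommGroup M] [Module A M] [AddCommGroup N] [Module A N]
    (hann : ∀ a : A, (∀ x : P ⧸ Z, a • x = 0) → ∀ m : M, a • m = 0)
    (π : M →ₗ[A] N) (hπ : Function.Surjective π) (f : (P ⧸ Z) →ₗ[A] N) :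
    ∃ g : (P ⧸ Z) →ₗ[A] M, π.comp g = f := by
  -- lift f ∘ mkQ through π using projectivity of P
  obtain ⟨h, hh⟩ := Module.projective_lifting_property π (f.comp Z.mkQ) hπ
  -- section from projectivity
  obtain ⟨s, hs⟩ := Module.projective_def.mp (inferInstance : Module.Projective A P)
  -- each coefficient of s z annihilates P ⧸ Z, for z ∈ Z
  have key : ∀ z ∈ Z, ∀ x : P, ∀ v : P ⧸ Z, (s z) x • v = 0 := by
    intro z hz x v
    have := hZ ((LinearMap.toSpanSingleton A (P ⧸ Z) v).comp
      ((Finsupp.lapply x).comp s)) z hz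
    simpa [LinearMap.toSpanSingleton, LinearMap.smulRight] using this
  -- h kills Z
  have hker : ∀ z ∈ Z, h z = 0 := by
    intro z hz
    have hz' : z = (s z).sum fun x a => a • x := by
      conv_lhs => rw [← hs z]
      simp [Finsupp.linearCombination_apply]
    rw [hz', map_finsuppSum]
    refine Finset.sum_eq_zero fun x hx => ?_
    show h ((s z) x • x) = 0
    rw [map_smul]
    exact hann _ (key z hz x) (h x)
  refine ⟨Z.liftQ h (fun z hz => hker z hz), ?_⟩
  ext y
  have := LinearMap.congr_fun hh y
  exact this
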